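/- For every (α,β,γ) ∈ K^* × K^2, the formulas v_k·e1 = β q^{-2k} v_k - q^{-2(k-1)} (((q^{2k}-1)(q^{2(k-1)}-1))/((q^4-1)(q^2-1))) α v_{k-2} for 2 ≤ k ≤ l-1 and v_k·e1 = β q^{-2k} v_k for k = 0,1; v_k·e2 = v_{k+1} for 0 ≤ k ≤ l-2 and v_{l-1}·e2 = γ v_0; v_k·e3 = α ((q^{2k}-1)/(q^2-1)) v_{k-1} for 1 ≤ k ≤ l-1 and v_0·e3 = 0; v_k·z = α v_k, define a right U_q^+(B_2)-module structure on the K-vector space with basis v_0,…,v_{l-1}, and the resulting module V'_4(α,β,γ) is a simple U_q^+(B_2)-module of K-dimension l. -/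

import Mathlib

set_option linter.unusedSectionVars false
set_option maxHeartbeats 1000000


noncomputable section

open MulOpposite

/-- The defining relations of `U_q^+(B_2)` on the free algebra on generators
`e1 = ι 0`, `e2 = ι 1`, `e3 = ι 2`, `z = ι 3`. -/
inductive UqB2Rel (K : Type*) [Field K] (q : K) :
    FreeAlgebra K (Fin 4) → FreeAlgebra K (Fin 4) → Prop
  | e1z : UqB2Rel K q (FreeAlgebra.ι K 0 * FreeAlgebra.ι K 3)
      (FreeAlgebra.ι K 3 * FreeAlgebra.ι K 0)
  | e2z : UqB2Rel K q (FreeAlgebra.ι K 1 * FreeAlgebra.ι K 3)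
      (FreeAlgebra.ι K 3 * FreeAlgebra.ι K 1)
  | e3z : UqB2Rel K q (FreeAlgebra.ι K 2 * FreeAlgebra.ι K 3)
      (FreeAlgebra.ι K 3 * FreeAlgebra.ι K 2)
  | e1e3 : UqB2Rel K q (FreeAlgebra.ι K 0 * FreeAlgebra.ι K 2)
      (q⁻¹ ^ 2 • (FreeAlgebra.ι K 2 * FreeAlgebra.ι K 0))
  | e2e3 : UqB2Rel K q (FreeAlgebra.ι K 1 * FreeAlgebra.ι K 2)
      (q ^ 2 • (FreeAlgebra.ι K 2 * FreeAlgebra.ι K 1) + FreeAlgebra.ι K 3)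
  | e2e1 : UqB2Rel K q (FreeAlgebra.ι K 1 * FreeAlgebra.ι K 0)
      (q⁻¹ ^ 2 • (FreeAlgebra.ι K 0 * FreeAlgebra.ι K 1) - q⁻¹ ^ 2 • FreeAlgebra.ι K 2)

/-- `U_q^+(B_2)`, presented by generators `e1, e2, e3, z` and the relations above. -/
abbrev UqB2 (K : Type*) [Field K] (q : K) : Type _ := RingQuot (UqB2Rel K q)

variable (K : Type*) [Field K] (q : K)

/-- The generator `e1` of `U_q^+(B_2)`. -/
def Ue1 : UqB2 K q := RingQuot.mkAlgHom K (UqB2Rel K q) (FreeAlgebra.ι K 0)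
/-- The generator `e2` of `U_q^+(B_2)`. -/
def Ue2 : UqB2 K q := RingQuot.mkAlgHom K (UqB2Rel K q) (FreeAlgebra.ι K 1)
/-- The generator `e3` of `U_q^+(B_2)`. -/
def Ue3 : UqB2 K q := RingQuot.mkAlgHom K (UqB2Rel K q) (FreeAlgebra.ι K 2)
/-- The generator `z` of `U_q^+(B_2)`. -/
def Uz : UqB2 K q := RingQuot.mkAlgHom K (UqB2Rel K q) (FreeAlgebra.ι K 3)


namespace Stmt14Aux

variable {F : Type*} [Field F]
variable (l : ℕ) [NeZero l] (ω α β γ : F)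

def χf (k : Fin l) : F := ω ^ (k : ℕ)
def ccf (k : Fin l) : F := (χf l ω k - 1) / (ω - 1)
def ttf (k : Fin l) : F := if k + 1 = 0 then γ else 1
def bbf (k : Fin l) : F := β * (χf l ω k)⁻¹
def CCf (k : Fin l) : F :=
  α * (χf l ω (k - 1))⁻¹ *
    ((χf l ω k - 1) * (χf l ω (k - 1) - 1) / ((ω ^ 2 - 1) * (ω - 1)))

lemma val_add_one (k : Fin l) : ((k + 1 : Fin l) : ℕ) = ((k : ℕ) + 1) % l := by
  conv_rhs => rw [Nat.add_mod, Nat.mod_eq_of_lt k.isLt]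
  rw [Fin.val_add, Fin.val_one']

lemma pow_val_mod (hωl : ω ^ l = 1) (a : ℕ) : ω ^ (a % l) = ω ^ a := by
  conv_rhs => rw [← Nat.div_add_mod a l, pow_add, pow_mul, hωl, one_pow, one_mul]

lemma chi_zero : χf l ω 0 = 1 := by simp [χf]

lemma chi_mk (a : ℕ) (h : a < l) : χf l ω (⟨a, h⟩ : Fin l) = ω ^ a := rfl

lemma chi_add_one (hωl : ω ^ l = 1) (k : Fin l) : χf l ω (k + 1) = ω * χf l ω k := by
  rw [χf, χf, val_add_one, pow_val_mod l ω hωl, pow_succ, mul_comm]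

lemma chi_ne_zero (hω0 : ω ≠ 0) (k : Fin l) : χf l ω k ≠ 0 := pow_ne_zero _ hω0

lemma chi_sub_one (hω0 : ω ≠ 0) (hωl : ω ^ l = 1) (k : Fin l) :
    χf l ω (k - 1) = ω⁻¹ * χf l ω k := by
  have h := chi_add_one l ω hωl (k - 1)
  rw [sub_add_cancel] at h
  rw [h]
  field_simp

lemma last_iff (k : Fin l) : k + 1 = 0 ↔ (k : ℕ) + 1 = l := by
  rw [Fin.ext_iff, Fin.val_zero, val_add_one]
  constructor
  · intro h
    have h2 := Nat.dvd_of_mod_eq_zero h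
    have h3 := Nat.le_of_dvd (by omega) h2
    have := k.isLt
    omega
  · intro h
    rw [h, Nat.mod_self]

lemma ccf_zero : ccf l ω 0 = 0 := by simp [ccf, chi_zero]

lemma CCf_zero : CCf l ω α 0 = 0 := by simp [CCf, chi_zero]

lemma CC_succ (hωl : ω ^ l = 1) (k : Fin l) :
    CCf l ω α (k + 1) =
      α * (χf l ω k)⁻¹ *
        ((ω * χf l ω k - 1) * (χf l ω k - 1) / ((ω ^ 2 - 1) * (ω - 1))) := by
  rw [CCf, add_sub_cancel_right, chi_add_one l ω hωl]

lemma ttf_pos (k : Fin l) (h : k + 1 = 0) : ttf l γ k = γ := if_pos h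
lemma ttf_neg (k : Fin l) (h : k + 1 ≠ 0) : ttf l γ k = 1 := if_neg h

lemma one_ne_zero_fin (hl3 : 3 ≤ l) : (1 : Fin l) ≠ 0 := by
  intro h
  rw [Fin.ext_iff, Fin.val_one', Fin.val_zero, Nat.mod_eq_of_lt (by omega)] at h
  omega

def opE1 : Module.End F (Fin l → F) where
  toFun v := fun j => bbf l ω β j * v j - CCf l ω α (j + 1 + 1) * v (j + 1 + 1)
  map_add' u v := by funext j; simp only [Pi.add_apply]; ring
  map_smul' c v := by
    funext j; simp only [Pi.smul_apply, smul_eq_mul, RingHom.id_apply]; ring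

def opE2 : Module.End F (Fin l → F) where
  toFun v := fun j => ttf l γ (j - 1) * v (j - 1)
  map_add' u v := by funext j; simp only [Pi.add_apply]; ring
  map_smul' c v := by
    funext j; simp only [Pi.smul_apply, smul_eq_mul, RingHom.id_apply]; ring

def opE3 : Module.End F (Fin l → F) where
  toFun v := fun j => α * ccf l ω (j + 1) * v (j + 1)
  map_add' u v := by funext j; simp only [Pi.add_apply]; ring
  map_smul' c v := by
    funext j; simp only [Pi.smul_apply, smul_eq_mul, RingHom.id_apply]; ring

def opZ : Module.End F (Fin l → F) where
  toFun v := fun j => α * v j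
  map_add' u v := by funext j; simp only [Pi.add_apply]; ring
  map_smul' c v := by
    funext j; simp only [Pi.smul_apply, smul_eq_mul, RingHom.id_apply]; ring

lemma opE1_apply (v : Fin l → F) (j : Fin l) :
    opE1 l ω α β v j = bbf l ω β j * v j - CCf l ω α (j + 1 + 1) * v (j + 1 + 1) := rfl
lemma opE2_apply (v : Fin l → F) (j : Fin l) :
    opE2 l γ v j = ttf l γ (j - 1) * v (j - 1) := rfl
lemma opE3_apply (v : Fin l → F) (j : Fin l) :
    opE3 l ω α v j = α * ccf l ω (j + 1) * v (j + 1) := rfl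
lemma opZ_apply (v : Fin l → F) (j : Fin l) :
    opZ l α v j = α * v j := rfl


section Rels

variable (hl3 : 3 ≤ l) (hω0 : ω ≠ 0) (hω1 : ω ≠ 1) (hω2 : ω ^ 2 ≠ 1) (hωl : ω ^ l = 1)

lemma relZ1 : opZ l α * opE1 l ω α β = opE1 l ω α β * opZ l α := by
  apply LinearMap.ext; intro v; funext j
  simp only [Module.End.mul_apply, opZ_apply, opE1_apply]
  ring

lemma relZ2 : opZ l α * opE2 l γ = opE2 l γ * opZ l α := by
  apply LinearMap.ext; intro v; funext j
  simp only [Module.End.mul_apply, opZ_apply, opE2_apply]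
  ring

lemma relZ3 : opZ l α * opE3 l ω α = opE3 l ω α * opZ l α := by
  apply LinearMap.ext; intro v; funext j
  simp only [Module.End.mul_apply, opZ_apply, opE3_apply]
  ring

include hω0 hω1 hωl in
lemma coefC1 (k : Fin l) :
    α * ccf l ω (k + 1) * bbf l ω β (k + 1) = ω⁻¹ * (bbf l ω β k * (α * ccf l ω (k + 1))) := by
  have hm1 : ω - 1 ≠ 0 := sub_ne_zero.mpr hω1
  have hx := chi_ne_zero l ω hω0 k
  simp only [ccf, bbf, chi_add_one l ω hωl]
  field_simp

include hω0 hω1 hω2 hωl in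
lemma coefC2 (k : Fin l) :
    α * ccf l ω (k + 1) * CCf l ω α (k + 1 + 1 + 1) =
      ω⁻¹ * (CCf l ω α (k + 1 + 1) * (α * ccf l ω (k + 1 + 1 + 1))) := by
  have hm1 : ω - 1 ≠ 0 := sub_ne_zero.mpr hω1
  have hm2 : ω ^ 2 - 1 ≠ 0 := sub_ne_zero.mpr hω2
  have hx := chi_ne_zero l ω hω0 k
  simp only [ccf, CC_succ l ω α hωl, chi_add_one l ω hωl]
  field_simp

include hl3 hω0 hω1 hωl in
lemma coefC3 (k : Fin l) :
    α * ccf l ω (k + 1) * ttf l γ k = ω * (ttf l γ (k - 1) * (α * ccf l ω k)) + α := by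
  have hm1 : ω - 1 ≠ 0 := sub_ne_zero.mpr hω1
  rcases eq_or_ne (k + 1) 0 with h1 | h1
  · have hj0 : k ≠ 0 := by
      intro h
      rw [h, zero_add] at h1
      exact one_ne_zero_fin l hl3 h1
    have htj : ttf l γ (k - 1) = 1 := by
      rw [ttf, if_neg (by rwa [sub_add_cancel])]
    have hxv : χf l ω k = ω⁻¹ := by
      have h2 : ω * χf l ω k = 1 := by rw [← chi_add_one l ω hωl, h1, chi_zero]
      field_simp
      linear_combination h2
    rw [htj, h1, ccf_zero, ccf, hxv]
    field_simp
    ring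
  · rcases eq_or_ne k 0 with h0 | h0
    · have htj : ttf l γ k = 1 := by rw [ttf, if_neg h1]
      rw [htj, ccf, ccf, chi_add_one l ω hωl, h0, chi_zero]
      field_simp
      ring
    · have htj : ttf l γ k = 1 := by rw [ttf, if_neg h1]
      have htj' : ttf l γ (k - 1) = 1 := by
        rw [ttf, if_neg (by rwa [sub_add_cancel])]
      rw [htj, htj', ccf, ccf, chi_add_one l ω hωl]
      field_simp
      ring

include hω0 hω1 hωl in
lemma coefC4 (k : Fin l) :
    bbf l ω β k * ttf l γ (k - 1) = ω⁻¹ * (ttf l γ (k - 1) * bbf l ω β (k - 1)) := by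
  have hx := chi_ne_zero l ω hω0 k
  simp only [bbf, chi_sub_one l ω hω0 hωl, mul_inv, inv_inv]
  field_simp

include hl3 hω0 hω1 hω2 hωl in
lemma coefC5 (k : Fin l) :
    CCf l ω α (k + 1 + 1) * ttf l γ (k + 1) =
      ω⁻¹ * (ttf l γ (k - 1) * CCf l ω α (k + 1)) + ω⁻¹ * (α * ccf l ω (k + 1)) := by
  have hm1 : ω - 1 ≠ 0 := sub_ne_zero.mpr hω1
  have hm2 : ω ^ 2 - 1 ≠ 0 := sub_ne_zero.mpr hω2
  have hx := chi_ne_zero l ω hω0 k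
  have hy : χf l ω k * (χf l ω k)⁻¹ = 1 := mul_inv_cancel₀ hx
  have hs : (ω ^ 2 - 1) * (ω ^ 2 - 1)⁻¹ = 1 := mul_inv_cancel₀ hm2
  rcases eq_or_ne (k + 1 + 1) 0 with h2 | h2
  · have hj0 : k ≠ 0 := by
      intro h
      rw [h] at h2
      have hv := congrArg Fin.val h2
      rw [val_add_one, val_add_one] at hv
      have hv' : ((0 + 1) % l + 1) % l = 0 := hv
      rw [Nat.mod_eq_of_lt (show 0 + 1 < l by omega)] at hv'
      rw [Nat.mod_eq_of_lt (show 0 + 1 + 1 < l by omega)] at hv'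
      omega
    have htj1 : ttf l γ (k + 1) = γ := ttf_pos l γ _ h2
    have htj : ttf l γ (k - 1) = 1 := by
      rw [ttf, if_neg (by rwa [sub_add_cancel])]
    have h3 : ω * (ω * χf l ω k) = 1 := by
      rw [← chi_add_one l ω hωl, ← chi_add_one l ω hωl, h2, chi_zero]
    rw [htj1, htj]
    simp only [ccf, CC_succ l ω α hωl, chi_add_one l ω hωl]
    simp only [div_eq_mul_inv, mul_inv]
    linear_combination (α * ω⁻¹ * (χf l ω k)⁻¹ * (ω * χf l ω k - 1) * (ω ^ 2 - 1)⁻¹ *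
        (ω - 1)⁻¹ * (γ - 1)) * h3 +
      (α * ω⁻¹ * (ω - 1)⁻¹ * (ω * χf l ω k - 1) * (ω ^ 2 - 1) * (ω ^ 2 - 1)⁻¹) * hy +
      (α * ω⁻¹ * (ω - 1)⁻¹ * (ω * χf l ω k - 1)) * hs
  · have htj1 : ttf l γ (k + 1) = 1 := ttf_neg l γ _ h2
    rcases eq_or_ne k 0 with h0 | h0
    · have htj : ttf l γ (k - 1) = γ := by
        rw [ttf, sub_add_cancel, h0]
        exact if_pos rfl
      rw [htj1, htj]
      simp only [ccf, CC_succ l ω α hωl, chi_add_one l ω hωl, h0, chi_zero]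
      field_simp
      ring
    · have htj : ttf l γ (k - 1) = 1 := by
        rw [ttf, if_neg (by rwa [sub_add_cancel])]
      rw [htj1, htj]
      simp only [ccf, CC_succ l ω α hωl, chi_add_one l ω hωl]
      simp only [div_eq_mul_inv, mul_inv]
      linear_combination (α * (ω - 1)⁻¹ * ω⁻¹ * (ω ^ 2 - 1)⁻¹ * (ω ^ 2 - 1) *
          (ω * χf l ω k - 1)) * hy +
        (α * (ω - 1)⁻¹ * ω⁻¹ * (ω * χf l ω k - 1)) * hs

include hω0 hω1 hω2 hωl in
lemma rel4 : opE3 l ω α * opE1 l ω α β = ω⁻¹ • (opE1 l ω α β * opE3 l ω α) := by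
  apply LinearMap.ext; intro v; funext j
  simp only [Module.End.mul_apply, LinearMap.smul_apply, Pi.smul_apply, smul_eq_mul,
    opE3_apply, opE1_apply]
  linear_combination v (j + 1) * coefC1 l ω α β hω0 hω1 hωl j -
    v (j + 1 + 1 + 1) * coefC2 l ω α hω0 hω1 hω2 hωl j

include hl3 hω0 hω1 hωl in
lemma rel5 : opE3 l ω α * opE2 l γ = ω • (opE2 l γ * opE3 l ω α) + opZ l α := by
  apply LinearMap.ext; intro v; funext j
  simp only [Module.End.mul_apply, LinearMap.add_apply, LinearMap.smul_apply, Pi.add_apply,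
    Pi.smul_apply, smul_eq_mul, opE3_apply, opE2_apply, opZ_apply,
    add_sub_cancel_right, sub_add_cancel]
  linear_combination v j * coefC3 l ω α γ hl3 hω0 hω1 hωl j

include hl3 hω0 hω1 hω2 hωl in
lemma rel6 : opE1 l ω α β * opE2 l γ =
    ω⁻¹ • (opE2 l γ * opE1 l ω α β) - ω⁻¹ • opE3 l ω α := by
  apply LinearMap.ext; intro v; funext j
  simp only [Module.End.mul_apply, LinearMap.sub_apply, LinearMap.smul_apply, Pi.sub_apply,
    Pi.smul_apply, smul_eq_mul, opE1_apply, opE2_apply, opE3_apply,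
    add_sub_cancel_right, sub_add_cancel]
  linear_combination v (j - 1) * coefC4 l ω β γ hω0 hω1 hωl j -
    v (j + 1) * coefC5 l ω α γ hl3 hω0 hω1 hω2 hωl j

end Rels



section Singles

lemma shift2_iff (j k : Fin l) : j + 1 + 1 = k ↔ j = k - 1 - 1 := by
  constructor <;> intro h
  · rw [← h]; simp only [add_sub_cancel_right, sub_add_cancel]
  · rw [h]; simp only [add_sub_cancel_right, sub_add_cancel]

lemma shift1_iff (j k : Fin l) : j + 1 = k ↔ j = k - 1 := by
  constructor <;> intro h
  · rw [← h]; simp only [add_sub_cancel_right, sub_add_cancel]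
  · rw [h]; simp only [add_sub_cancel_right, sub_add_cancel]

lemma shiftm1_iff (j k : Fin l) : j - 1 = k ↔ j = k + 1 := by
  constructor <;> intro h
  · rw [← h]; simp only [add_sub_cancel_right, sub_add_cancel]
  · rw [h]; simp only [add_sub_cancel_right, sub_add_cancel]

lemma opE1_single (k : Fin l) :
    opE1 l ω α β (Pi.single k 1 : Fin l → F) =
      bbf l ω β k • (Pi.single k 1 : Fin l → F) -
        CCf l ω α k • (Pi.single (k - 1 - 1) 1 : Fin l → F) := by
  funext j
  simp only [opE1_apply, Pi.sub_apply, Pi.smul_apply, smul_eq_mul, Pi.single_apply]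
  rcases eq_or_ne j k with h1 | h1 <;> rcases eq_or_ne (j + 1 + 1) k with h2 | h2
  · have h3 : j = j + 1 + 1 := h1.trans h2.symm
    rw [if_pos h1, if_pos h2, if_pos ((shift2_iff l j k).mp h2), ← h1, ← h3]
  · rw [if_pos h1, if_neg h2,
      if_neg (fun hh => h2 ((shift2_iff l j k).mpr hh)), ← h1]
    ring
  · rw [if_neg h1, if_pos h2, if_pos ((shift2_iff l j k).mp h2), ← h2]
    ring
  · rw [if_neg h1, if_neg h2,
      if_neg (fun hh => h2 ((shift2_iff l j k).mpr hh))]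
    ring

lemma opE2_single (k : Fin l) :
    opE2 l γ (Pi.single k 1 : Fin l → F) =
      ttf l γ k • (Pi.single (k + 1) 1 : Fin l → F) := by
  funext j
  rw [opE2_apply, Pi.smul_apply, smul_eq_mul, Pi.single_apply, Pi.single_apply]
  rcases eq_or_ne (j - 1) k with h1 | h1
  · rw [if_pos h1, if_pos ((shiftm1_iff l j k).mp h1), ← h1]
  · rw [if_neg h1, if_neg (fun hh => h1 ((shiftm1_iff l j k).mpr hh))]
    ring

lemma opE3_single (k : Fin l) :
    opE3 l ω α (Pi.single k 1 : Fin l → F) =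
      (α * ccf l ω k) • (Pi.single (k - 1) 1 : Fin l → F) := by
  funext j
  rw [opE3_apply, Pi.smul_apply, smul_eq_mul, Pi.single_apply, Pi.single_apply]
  rcases eq_or_ne (j + 1) k with h1 | h1
  · rw [if_pos ((shift1_iff l j k).mp h1), if_pos h1, ← h1]
  · rw [if_neg h1, if_neg (fun hh => h1 ((shift1_iff l j k).mpr hh))]
    ring

lemma opZ_single (k : Fin l) :
    opZ l α (Pi.single k 1 : Fin l → F) = α • (Pi.single k 1 : Fin l → F) := by
  funext j
  rw [opZ_apply, Pi.smul_apply, smul_eq_mul]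

end Singles

section FinIdx

lemma add_one_mk (k : Fin l) (h : (k : ℕ) + 1 < l) :
    k + 1 = (⟨(k : ℕ) + 1, h⟩ : Fin l) := by
  apply Fin.ext
  rw [val_add_one, Nat.mod_eq_of_lt h]

lemma sub_one_mk (k : Fin l) (h : 0 < (k : ℕ)) :
    k - 1 = (⟨(k : ℕ) - 1, Nat.lt_of_le_of_lt (Nat.sub_le _ _) k.isLt⟩ : Fin l) := by
  have h2 : k = (⟨(k : ℕ) - 1, Nat.lt_of_le_of_lt (Nat.sub_le _ _) k.isLt⟩ : Fin l) + 1 := by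
    apply Fin.ext
    rw [val_add_one]
    show (k : ℕ) = ((k : ℕ) - 1 + 1) % l
    rw [Nat.mod_eq_of_lt (by omega)]
    omega
  exact sub_eq_of_eq_add h2

lemma sub_two_mk (k : Fin l) (h : 2 ≤ (k : ℕ)) :
    k - 1 - 1 = (⟨(k : ℕ) - 2, Nat.lt_of_le_of_lt (Nat.sub_le _ _) k.isLt⟩ : Fin l) := by
  rw [sub_one_mk l k (by omega), sub_one_mk l _ (by simp; omega)]
  apply Fin.ext
  show (k : ℕ) - 1 - 1 = (k : ℕ) - 2
  omega

lemma ccf_ne_zero (hprim : IsPrimitiveRoot ω l) (hω1 : ω ≠ 1) (k : Fin l) (hk : k ≠ 0) :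
    ccf l ω k ≠ 0 := by
  apply div_ne_zero _ (sub_ne_zero.mpr hω1)
  rw [χf]
  intro h
  have h2 : ω ^ (k : ℕ) = 1 := sub_eq_zero.mp h
  have h3 : l ∣ (k : ℕ) := hprim.dvd_of_pow_eq_one _ h2
  have h4 : (k : ℕ) = 0 := Nat.eq_zero_of_dvd_of_lt h3 k.isLt
  exact hk (Fin.ext h4)

end FinIdx


lemma CCf_one : CCf l ω α 1 = 0 := by
  have h : (1 : Fin l) - 1 = 0 := sub_self 1
  rw [CCf, h, chi_zero]
  simp

end Stmt14Aux

/-- For `(α,β,γ) ∈ K^* × K^2`, the formulas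
`v_k·e1 = β q^{-2k} v_k - q^{-2(k-1)} (((q^{2k}-1)(q^{2(k-1)}-1))/((q^4-1)(q^2-1))) α v_{k-2}`
(for `k ≥ 2`), `v_k·e1 = β q^{-2k} v_k` (for `k = 0,1`), `v_k·e2 = v_{k+1}` (for `k ≤ l-2`),
`v_{l-1}·e2 = γ v_0`, `v_k·e3 = α ((q^{2k}-1)/(q^2-1)) v_{k-1}` (for `k ≥ 1`), `v_0·e3 = 0`,
`v_k·z = α v_k` define a right `U_q^+(B_2)`-module structure on the `K`-vector space with
basis `v_0, …, v_{l-1}`, and the resulting module `V'_4(α,β,γ)` is simple of dimension `l`. -/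


theorem stmt14 (m : ℕ) (hm : 5 ≤ m) (hq : IsPrimitiveRoot q m)
    (l : ℕ) (hl : l = if Odd m then m else m / 2)
    (α β γ : K) (hα : α ≠ 0) :
    ∃ ρ : UqB2 K q →ₐ[K] (Module.End K (Fin l → K))ᵐᵒᵖ,
      (∀ k : Fin l, 2 ≤ (k : ℕ) → (ρ (Ue1 K q)).unop (Pi.single k 1) =
        (β * q⁻¹ ^ (2 * (k : ℕ))) • (Pi.single k 1 : Fin l → K) -
          (q⁻¹ ^ (2 * ((k : ℕ) - 1)) *
            ((q ^ (2 * (k : ℕ)) - 1) * (q ^ (2 * ((k : ℕ) - 1)) - 1) /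
              ((q ^ 4 - 1) * (q ^ 2 - 1))) * α) •
            (Pi.single (⟨(k : ℕ) - 2, Nat.lt_of_le_of_lt (Nat.sub_le _ _) k.isLt⟩ : Fin l) 1 :
              Fin l → K)) ∧
      (∀ k : Fin l, (k : ℕ) < 2 → (ρ (Ue1 K q)).unop (Pi.single k 1) =
        (β * q⁻¹ ^ (2 * (k : ℕ))) • (Pi.single k 1 : Fin l → K)) ∧
      (∀ k : Fin l, ∀ hk : (k : ℕ) + 1 < l, (ρ (Ue2 K q)).unop (Pi.single k 1) =
        (Pi.single (⟨(k : ℕ) + 1, hk⟩ : Fin l) 1 : Fin l → K)) ∧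
      (∀ k : Fin l, (k : ℕ) + 1 = l → (ρ (Ue2 K q)).unop (Pi.single k 1) =
        γ • (Pi.single (⟨0, k.pos⟩ : Fin l) 1 : Fin l → K)) ∧
      (∀ k : Fin l, 0 < (k : ℕ) → (ρ (Ue3 K q)).unop (Pi.single k 1) =
        (α * ((q ^ (2 * (k : ℕ)) - 1) / (q ^ 2 - 1))) •
          (Pi.single (⟨(k : ℕ) - 1, Nat.lt_of_le_of_lt (Nat.sub_le _ _) k.isLt⟩ : Fin l) 1 :
            Fin l → K)) ∧
      (∀ k : Fin l, (k : ℕ) = 0 → (ρ (Ue3 K q)).unop (Pi.single k 1) = 0) ∧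
      (∀ k : Fin l, (ρ (Uz K q)).unop (Pi.single k 1) = α • (Pi.single k 1 : Fin l → K)) ∧
      Nontrivial (Fin l → K) ∧
      (∀ W : Submodule K (Fin l → K),
        (∀ u : UqB2 K q, ∀ v ∈ W, (ρ u).unop v ∈ W) → W = ⊥ ∨ W = ⊤) ∧
      Module.finrank K (Fin l → K) = l := by
  classical
  have hm0 : 0 < m := by omega
  have hl3 : 3 ≤ l := by
    rw [hl]
    split_ifs with h
    · omega
    · rw [Nat.not_odd_iff_even] at h
      obtain ⟨c, hc⟩ := h
      omega
  haveI : NeZero l := ⟨by omega⟩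
  set ω := q ^ 2 with hωdef
  have hprim : IsPrimitiveRoot ω l := by
    by_cases hodd : Odd m
    · have hlm : l = m := by rw [hl, if_pos hodd]
      rw [hlm]
      exact hq.pow_of_coprime 2 (Nat.coprime_two_left.mpr hodd)
    · have hev : Even m := Nat.not_odd_iff_even.mp hodd
      have hml : m = 2 * l := by
        rw [hl, if_neg hodd]
        obtain ⟨c, hc⟩ := hev
        omega
      exact hq.pow hm0 hml
  have hωl : ω ^ l = 1 := hprim.pow_eq_one
  have hω0 : ω ≠ 0 := by
    intro h
    rw [h, zero_pow (show l ≠ 0 by omega)] at hωl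
    exact zero_ne_one hωl
  have hω1 : ω ≠ 1 := hprim.ne_one (by omega)
  have hω2 : ω ^ 2 ≠ 1 := by
    intro h
    have h2 := hprim.dvd_of_pow_eq_one 2 h
    have h3 := Nat.le_of_dvd (by norm_num) h2
    omega
  have hqinv : q⁻¹ ^ 2 = ω⁻¹ := by rw [inv_pow, hωdef]
  set E1 := Stmt14Aux.opE1 l ω α β with hE1def
  set E2 := Stmt14Aux.opE2 l γ (F := K) with hE2def
  set E3 := Stmt14Aux.opE3 l ω α with hE3def
  set EZ := Stmt14Aux.opZ l α (F := K) with hEZdef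
  set g : Fin 4 → (Module.End K (Fin l → K))ᵐᵒᵖ := ![op E1, op E2, op E3, op EZ] with hgdef
  have hg0 : g 0 = op E1 := rfl
  have hg1 : g 1 = op E2 := rfl
  have hg2 : g 2 = op E3 := rfl
  have hg3 : g 3 = op EZ := rfl
  set Fh : FreeAlgebra K (Fin 4) →ₐ[K] (Module.End K (Fin l → K))ᵐᵒᵖ :=
    FreeAlgebra.lift K g with hFhdef
  have hFι : ∀ i, Fh (FreeAlgebra.ι K i) = g i := fun i => by
    rw [hFhdef, FreeAlgebra.lift_ι_apply]
  have hrel : ∀ ⦃x y : FreeAlgebra K (Fin 4)⦄, UqB2Rel K q x y → Fh x = Fh y := by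
    intro x y r
    cases r with
    | e1z =>
      simp only [map_mul, hFι]
      rw [hg0, hg3]
      apply unop_injective
      simp only [unop_mul, unop_op]
      exact Stmt14Aux.relZ1 l ω α β
    | e2z =>
      simp only [map_mul, hFι]
      rw [hg1, hg3]
      apply unop_injective
      simp only [unop_mul, unop_op]
      exact Stmt14Aux.relZ2 l α γ
    | e3z =>
      simp only [map_mul, hFι]
      rw [hg2, hg3]
      apply unop_injective
      simp only [unop_mul, unop_op]
      exact Stmt14Aux.relZ3 l ω α
    | e1e3 =>
      simp only [map_mul, map_smul, hFι]
      rw [hg0, hg2]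
      apply unop_injective
      simp only [unop_mul, unop_smul, unop_op]
      rw [hqinv]
      exact Stmt14Aux.rel4 l ω α β hω0 hω1 hω2 hωl
    | e2e3 =>
      simp only [map_mul, map_add, map_smul, hFι]
      rw [hg1, hg2, hg3]
      apply unop_injective
      simp only [unop_mul, unop_add, unop_smul, unop_op]
      exact Stmt14Aux.rel5 l ω α γ hl3 hω0 hω1 hωl
    | e2e1 =>
      simp only [map_mul, map_sub, map_smul, hFι]
      rw [hg0, hg1, hg2]
      apply unop_injective
      simp only [unop_mul, unop_sub, unop_smul, unop_op]
      rw [hqinv]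
      exact Stmt14Aux.rel6 l ω α β γ hl3 hω0 hω1 hω2 hωl
  set ρ : UqB2 K q →ₐ[K] (Module.End K (Fin l → K))ᵐᵒᵖ :=
    RingQuot.liftAlgHom K ⟨Fh, hrel⟩ with hρdef
  have hu1 : (ρ (Ue1 K q)).unop = E1 := by
    rw [hρdef, Ue1, RingQuot.liftAlgHom_mkAlgHom_apply, hFι, hg0, unop_op]
  have hu2 : (ρ (Ue2 K q)).unop = E2 := by
    rw [hρdef, Ue2, RingQuot.liftAlgHom_mkAlgHom_apply, hFι, hg1, unop_op]
  have hu3 : (ρ (Ue3 K q)).unop = E3 := by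
    rw [hρdef, Ue3, RingQuot.liftAlgHom_mkAlgHom_apply, hFι, hg2, unop_op]
  have huz : (ρ (Uz K q)).unop = EZ := by
    rw [hρdef, Uz, RingQuot.liftAlgHom_mkAlgHom_apply, hFι, hg3, unop_op]
  have ebb : ∀ k : Fin l, Stmt14Aux.bbf l ω β k = β * q⁻¹ ^ (2 * (k : ℕ)) := by
    intro k
    rw [Stmt14Aux.bbf, Stmt14Aux.χf, hωdef, inv_pow, pow_mul]
  have ecc : ∀ k : Fin l, Stmt14Aux.ccf l ω k = (q ^ (2 * (k : ℕ)) - 1) / (q ^ 2 - 1) := by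
    intro k
    rw [Stmt14Aux.ccf, Stmt14Aux.χf, hωdef, pow_mul]
  refine ⟨ρ, ?_, ?_, ?_, ?_, ?_, ?_, ?_, ?_, ?_, ?_⟩
  · -- e1, k ≥ 2
    intro k hk
    rw [hu1, hE1def, Stmt14Aux.opE1_single, Stmt14Aux.sub_two_mk l k hk, ebb k]
    have eCC : Stmt14Aux.CCf l ω α k =
        q⁻¹ ^ (2 * ((k : ℕ) - 1)) *
          ((q ^ (2 * (k : ℕ)) - 1) * (q ^ (2 * ((k : ℕ) - 1)) - 1) /
            ((q ^ 4 - 1) * (q ^ 2 - 1))) * α := by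
      rw [Stmt14Aux.CCf, Stmt14Aux.sub_one_mk l k (by omega), Stmt14Aux.chi_mk,
        Stmt14Aux.chi_mk, hωdef, inv_pow, pow_mul, pow_mul,
        show (q : K) ^ 4 = (q ^ 2) ^ 2 by ring]
      ring
    rw [eCC]
  · -- e1, k < 2
    intro k hk
    rw [hu1, hE1def, Stmt14Aux.opE1_single, ebb k]
    have eCC0 : Stmt14Aux.CCf l ω α k = 0 := by
      interval_cases hkv : (k : ℕ)
      · rw [show k = 0 from Fin.ext hkv, Stmt14Aux.CCf_zero]
      · rw [show k = 1 from Fin.ext (by rw [Fin.val_one', Nat.mod_eq_of_lt (by omega)]; exact hkv),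
          Stmt14Aux.CCf_one l ω α]
    rw [eCC0, zero_smul, sub_zero]
  · -- e2, k+1 < l
    intro k hk
    rw [hu2, hE2def, Stmt14Aux.opE2_single,
      Stmt14Aux.ttf_neg l γ k (fun h => by
        have := (Stmt14Aux.last_iff l k).mp h; omega),
      one_smul, Stmt14Aux.add_one_mk l k hk]
  · -- e2, k+1 = l
    intro k hk
    rw [hu2, hE2def, Stmt14Aux.opE2_single,
      Stmt14Aux.ttf_pos l γ k ((Stmt14Aux.last_iff l k).mpr hk),
      show k + 1 = (⟨0, k.pos⟩ : Fin l) by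
        apply Fin.ext
        rw [Stmt14Aux.val_add_one, hk, Nat.mod_self]]
  · -- e3, k ≥ 1
    intro k hk
    rw [hu3, hE3def, Stmt14Aux.opE3_single, Stmt14Aux.sub_one_mk l k hk, ecc k]
  · -- e3, k = 0
    intro k hk
    rw [hu3, hE3def, show k = 0 from Fin.ext hk, Stmt14Aux.opE3_single,
      Stmt14Aux.ccf_zero, mul_zero, zero_smul]
  · -- z
    intro k
    rw [huz, hEZdef, Stmt14Aux.opZ_single]
  · -- nontrivial
    refine ⟨0, Pi.single 0 1, fun h => ?_⟩
    have h0 := congrFun h 0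
    rw [Pi.single_eq_same] at h0
    exact zero_ne_one h0
  · -- simplicity
    intro W hW
    rcases eq_or_ne W ⊥ with hbot | hbot
    · exact Or.inl hbot
    refine Or.inr ?_
    obtain ⟨v0, hv0W, hv0⟩ := (Submodule.ne_bot_iff W).mp hbot
    have hW3 : ∀ v ∈ W, E3 v ∈ W := fun v hv => by
      have := hW (Ue3 K q) v hv
      rwa [hu3] at this
    have hW2 : ∀ v ∈ W, E2 v ∈ W := fun v hv => by
      have := hW (Ue2 K q) v hv
      rwa [hu2] at this
    have key : ∀ n : ℕ, ∀ v ∈ W, v ≠ 0 → (∀ j : Fin l, n < (j : ℕ) → v j = 0) →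
        (Pi.single 0 1 : Fin l → K) ∈ W := by
      intro n
      induction n with
      | zero =>
        intro v hv hvne hsupp
        have h0 : v 0 ≠ 0 := by
          intro h
          apply hvne
          funext j
          rcases eq_or_ne j 0 with rfl | hj
          · exact h
          · exact hsupp j (Nat.pos_of_ne_zero (fun hh => hj (Fin.ext hh)))
        have hv' : (Pi.single 0 1 : Fin l → K) = (v 0)⁻¹ • v := by
          funext j
          rw [Pi.smul_apply, smul_eq_mul, Pi.single_apply]
          rcases eq_or_ne j 0 with rfl | hj
          · rw [if_pos rfl, inv_mul_cancel₀ h0]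
          · rw [if_neg hj, hsupp j (Nat.pos_of_ne_zero (fun hh => hj (Fin.ext hh))), mul_zero]
        rw [hv']
        exact W.smul_mem _ hv
      | succ n ih =>
        intro v hv hvne hsupp
        by_cases hw : E3 v = 0
        · have hzero : ∀ j : Fin l, 0 < (j : ℕ) → v j = 0 := by
            intro j hj0
            have h := congrFun hw (j - 1)
            rw [hE3def, Stmt14Aux.opE3_apply, sub_add_cancel] at h
            have hc := Stmt14Aux.ccf_ne_zero l ω hprim hω1 j
              (fun hh => by rw [hh, Fin.val_zero] at hj0; omega)
            rcases mul_eq_zero.mp h with h' | h'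
            · rcases mul_eq_zero.mp h' with h'' | h''
              · exact absurd h'' hα
              · exact absurd h'' hc
            · exact h'
          exact ih v hv hvne (fun j hj => hzero j (by omega))
        · refine ih (E3 v) (hW3 v hv) hw (fun j hj => ?_)
          rw [hE3def, Stmt14Aux.opE3_apply]
          rcases eq_or_ne (j + 1) 0 with h1 | h1
          · rw [h1, Stmt14Aux.ccf_zero, mul_zero, zero_mul]
          · have hne : (j : ℕ) + 1 ≠ l := fun hh => h1 ((Stmt14Aux.last_iff l j).mpr hh)
            have hval : ((j + 1 : Fin l) : ℕ) = (j : ℕ) + 1 := by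
              rw [Stmt14Aux.val_add_one]
              exact Nat.mod_eq_of_lt (by have := j.isLt; omega)
            rw [hsupp (j + 1) (by rw [hval]; omega), mul_zero]
    have h0W : (Pi.single 0 1 : Fin l → K) ∈ W :=
      key l v0 hv0W hv0 (fun j hj => absurd j.isLt (by omega))
    have hall : ∀ n, ∀ h : n < l, (Pi.single (⟨n, h⟩ : Fin l) 1 : Fin l → K) ∈ W := by
      intro n
      induction n with
      | zero =>
        intro h
        have : (⟨0, h⟩ : Fin l) = 0 := Fin.ext rfl
        rw [this]
        exact h0W
      | succ n ih =>
        intro h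
        have hn := ih (by omega)
        have hmem := hW2 _ hn
        rw [hE2def, Stmt14Aux.opE2_single] at hmem
        have htt : Stmt14Aux.ttf l γ (⟨n, by omega⟩ : Fin l) = 1 := by
          apply Stmt14Aux.ttf_neg
          intro hh
          have := (Stmt14Aux.last_iff l _).mp hh
          simp only at this
          omega
        rw [htt, one_smul, Stmt14Aux.add_one_mk l _ (by simpa using h)] at hmem
        convert hmem using 2
    rw [eq_top_iff]
    intro v _
    rw [← Finset.univ_sum_single v]
    apply Submodule.sum_mem
    intro k _
    have hsk : Pi.single k (v k) = v k • (Pi.single k 1 : Fin l → K) := by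
      rw [← Pi.single_smul, smul_eq_mul, mul_one]
    rw [hsk]
    have hk := hall (k : ℕ) k.isLt
    rw [Fin.eta] at hk
    exact W.smul_mem _ hk
  · rw [Module.finrank_pi, Fintype.card_fin]
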